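/- Consider the stabilized first-order update on the right cut cell: u_{k₂}^{n+1} = u_{k₂}^n − (Δt/((1−α)h))·(H(u_{k₂}^n, u_{k+1}^n) − (1−η)H(u_{k₁}^n, u_{k₂}^n) − η H(u_{k−1}^n, u_{k₂}^n)), where α ∈ (0,1/2], ν ∈ (0, 1−α), η ∈ (0,1), Δt = νh/λ_max, H differentiable, non-decreasing in the first and non-increasing in the second argument, with |∂₁H(u,v)| + |∂₂H(w,u)| ≤ νh/Δt for all u,v,w. Then all partial derivatives of u_{k₂}^{n+1} with respect to u_{k−1}^n, u_{k₁}^n, u_{k₂}^n, u_{k+1}^n are nonnegative. -/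

import Mathlib

open Filter Topology in
private lemma mono_hasDerivAt_nonneg {f : ℝ → ℝ} {f' x : ℝ}
    (hf : Monotone f) (hd : HasDerivAt f f' x) : 0 ≤ f' := by
  have ht : Tendsto (slope f x) (𝓝[>] x) (𝓝 f') :=
    (hasDerivAt_iff_tendsto_slope.1 hd).mono_left
      (nhdsWithin_mono _ (fun y hy => Set.mem_compl_singleton_iff.2 (ne_of_gt hy)))
  refine ge_of_tendsto ht ?_
  filter_upwards [self_mem_nhdsWithin] with y hy
  rw [slope_def_field]
  exact div_nonneg (sub_nonneg.2 (hf (le_of_lt hy))) (sub_nonneg.2 (le_of_lt hy))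

open Filter Topology in
private lemma anti_hasDerivAt_nonpos {f : ℝ → ℝ} {f' x : ℝ}
    (hf : Antitone f) (hd : HasDerivAt f f' x) : f' ≤ 0 := by
  have := mono_hasDerivAt_nonneg (f := fun y => -f y) (hf.neg) (hd.neg)
  linarith

/-- Monotonicity of the stabilized first-order update on the right cut cell `I_{k₂}`. -/
theorem right_cut_cell_update_monotone
    (h α ν Δt lammax η : ℝ)
    (hh : 0 < h) (hα0 : 0 < α) (hα : α ≤ 1 / 2) (hν0 : 0 < ν) (hν : ν < 1 - α)
    (hη0 : 0 < η) (hη1 : η < 1)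
    (hlam : 0 < lammax) (hΔt : Δt = ν * h / lammax)
    (H H1 H2 : ℝ → ℝ → ℝ)
    (hH1 : ∀ a b : ℝ, HasDerivAt (fun x => H x b) (H1 a b) a)
    (hH2 : ∀ a b : ℝ, HasDerivAt (fun y => H a y) (H2 a b) b)
    (hmono1 : ∀ b, Monotone (fun a => H a b))
    (hmono2 : ∀ a, Antitone (fun b => H a b))
    (hbound : ∀ u v w : ℝ, |H1 u v| + |H2 w u| ≤ ν * h / Δt) :
    ∀ a b c d : ℝ,
      0 ≤ deriv (fun x => c - Δt / ((1 - α) * h) *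
            (H c d - (1 - η) * H b c - η * H x c)) a ∧
      0 ≤ deriv (fun x => c - Δt / ((1 - α) * h) *
            (H c d - (1 - η) * H x c - η * H a c)) b ∧
      0 ≤ deriv (fun x => x - Δt / ((1 - α) * h) *
            (H x d - (1 - η) * H b x - η * H a x)) c ∧
      0 ≤ deriv (fun x => c - Δt / ((1 - α) * h) *
            (H c x - (1 - η) * H b c - η * H a c)) d := by
  have h1α : (0:ℝ) < 1 - α := by linarith
  have hΔt0 : 0 < Δt := by rw [hΔt]; positivity
  set K : ℝ := Δt / ((1 - α) * h) with hKdef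
  have hK0 : 0 ≤ K := by positivity
  have hH1nn : ∀ a b : ℝ, 0 ≤ H1 a b := by
    intro a b
    exact mono_hasDerivAt_nonneg (hmono1 b) (hH1 a b)
  have hH2np : ∀ a b : ℝ, H2 a b ≤ 0 := by
    intro a b
    exact anti_hasDerivAt_nonpos (hmono2 a) (hH2 a b)
  intro a b c d
  have hKM : K * (ν * h / Δt) = ν / (1 - α) := by
    rw [hKdef]; field_simp
  have hfrac : ν / (1 - α) < 1 := (div_lt_one h1α).mpr hν
  refine ⟨?_, ?_, ?_, ?_⟩
  · have hd : HasDerivAt (fun x => c - Δt / ((1 - α) * h) *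
        (H c d - (1 - η) * H b c - η * H x c))
        (-(K * (-(η * H1 a c)))) a := by
      exact (((((hH1 a c).const_mul η).const_sub
        (H c d - (1 - η) * H b c)).const_mul K).const_sub c)
    rw [hd.deriv]
    nlinarith [mul_nonneg hK0 (mul_nonneg hη0.le (hH1nn a c))]
  · have hd : HasDerivAt (fun x => c - Δt / ((1 - α) * h) *
        (H c d - (1 - η) * H x c - η * H a c))
        (-(K * ((0 - (1 - η) * H1 b c) - 0))) b := by
      have inner : HasDerivAt (fun x => H c d - (1 - η) * H x c - η * H a c)
          ((0 - (1 - η) * H1 b c) - 0) b := by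
        exact ((hasDerivAt_const b (H c d)).sub ((hH1 b c).const_mul (1 - η))).sub
          (hasDerivAt_const b (η * H a c))
      exact (inner.const_mul K).const_sub c
    rw [hd.deriv]
    nlinarith [mul_nonneg hK0 (mul_nonneg (by linarith : (0:ℝ) ≤ 1 - η) (hH1nn b c))]
  · have hd : HasDerivAt (fun x => x - Δt / ((1 - α) * h) *
        (H x d - (1 - η) * H b x - η * H a x))
        (1 - K * ((H1 c d - (1 - η) * H2 b c) - η * H2 a c)) c := by
      have inner : HasDerivAt (fun x => H x d - (1 - η) * H b x - η * H a x)
          ((H1 c d - (1 - η) * H2 b c) - η * H2 a c) c :=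
        ((hH1 c d).sub ((hH2 b c).const_mul (1 - η))).sub ((hH2 a c).const_mul η)
      exact (hasDerivAt_id c).sub (inner.const_mul K)
    rw [hd.deriv]
    have hA : 0 ≤ H1 c d := hH1nn c d
    have hB : H2 b c ≤ 0 := hH2np b c
    have hC : H2 a c ≤ 0 := hH2np a c
    have e1 : H1 c d - H2 b c ≤ ν * h / Δt := by
      have := hbound c d b
      rw [abs_of_nonneg hA, abs_of_nonpos hB] at this
      linarith
    have e2 : H1 c d - H2 a c ≤ ν * h / Δt := by
      have := hbound c d a
      rw [abs_of_nonneg hA, abs_of_nonpos hC] at this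
      linarith
    have f1 : K * (H1 c d - H2 b c) ≤ K * (ν * h / Δt) :=
      mul_le_mul_of_nonneg_left e1 hK0
    have f2 : K * (H1 c d - H2 a c) ≤ K * (ν * h / Δt) :=
      mul_le_mul_of_nonneg_left e2 hK0
    have g1 : (1 - η) * (K * (H1 c d - H2 b c)) ≤ (1 - η) * (K * (ν * h / Δt)) :=
      mul_le_mul_of_nonneg_left f1 (by linarith)
    have g2 : η * (K * (H1 c d - H2 a c)) ≤ η * (K * (ν * h / Δt)) :=
      mul_le_mul_of_nonneg_left f2 (le_of_lt hη0)
    nlinarith [hKM, hfrac]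
  · have hd : HasDerivAt (fun x => c - Δt / ((1 - α) * h) *
        (H c x - (1 - η) * H b c - η * H a c))
        (-(K * (H2 c d))) d := by
      have inner : HasDerivAt (fun x => H c x - (1 - η) * H b c - η * H a c)
          (H2 c d) d := by
        simpa using ((hH2 c d).sub_const ((1 - η) * H b c)).sub_const (η * H a c)
      exact (inner.const_mul K).const_sub c
    rw [hd.deriv]
    nlinarith [mul_nonneg hK0 (neg_nonneg.2 (hH2np c d))]
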